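/- Let h_1(x) = x_{12} − 3x_{13} − x_{23} + 8x_{14} + 2x_{24} + 2x_{34} and h_2(x) = 2x_{12} + x_{13} + 5x_{23} − x_{14} − 3x_{24} + x_{34}, and let a_S = 2x_{12}^2 + x_{12}x_{13} + 16x_{12}x_{14} + 5x_{13}x_{14} + 5x_{12}x_{23} + 4x_{12}x_{24} + 32x_{13}x_{24} + 7x_{23}x_{24} − 34x_{12}x_{34} + 2x_{13}x_{34} + 8x_{14}x_{34} + 10x_{23}x_{34} + 2x_{24}x_{34} + 2x_{34}^2. Then the set of real homogeneous quadratic polynomials q in the six variables such that (i) q = α·qq + ℓ_1·h_1 + ℓ_2·h_2 for some α ∈ ℝ and homogeneous linear forms ℓ_1, ℓ_2, and (ii) q vanishes identically on each of the six linear subspaces L_1 = {x_{12} = x_{13} = x_{23} = h_1 = 0}, L_2 = {x_{13} = x_{23} = x_{34} = h_1 = 0}, L_3 = {x_{12} = x_{14} = x_{24} = h_2 = 0}, L_4 = {x_{14} = x_{24} = x_{34} = h_2 = 0}, L_5 = {x_{12} = x_{13} = x_{23} = x_{34} = 0}, L_6 = {x_{12} = x_{14} = x_{24} = x_{34} = 0},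 is exactly the two-dimensional vector space spanned by qq and a_S. -/

import Mathlib

open MvPolynomial

/-- Plücker quadric `x₁₂x₃₄ − x₁₃x₂₄ + x₁₄x₂₃`; coordinates of `ℝ^6` are ordered as
`(x₁₂, x₁₃, x₂₃, x₁₄, x₂₄, x₃₄)`, i.e. indices `0,…,5`. -/
noncomputable def qq6 : MvPolynomial (Fin 6) ℝ := X 0 * X 5 - X 1 * X 4 + X 3 * X 2

/-- `h₁ = x₁₂ − 3x₁₃ − x₂₃ + 8x₁₄ + 2x₂₄ + 2x₃₄`. -/
noncomputable def h16 : MvPolynomial (Fin 6) ℝ :=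
  X 0 - C 3 * X 1 - X 2 + C 8 * X 3 + C 2 * X 4 + C 2 * X 5

/-- `h₂ = 2x₁₂ + x₁₃ + 5x₂₃ − x₁₄ − 3x₂₄ + x₃₄`. -/
noncomputable def h26 : MvPolynomial (Fin 6) ℝ :=
  C 2 * X 0 + X 1 + C 5 * X 2 - X 3 - C 3 * X 4 + X 5

/-- The adjoint `a_S` of Example 5.4. -/
noncomputable def aS6 : MvPolynomial (Fin 6) ℝ :=
  C 2 * X 0 ^ 2 + X 0 * X 1 + C 16 * X 0 * X 3 + C 5 * X 1 * X 3 + C 5 * X 0 * X 2 +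
    C 4 * X 0 * X 4 + C 32 * X 1 * X 4 + C 7 * X 2 * X 4 - C 34 * X 0 * X 5 +
    C 2 * X 1 * X 5 + C 8 * X 3 * X 5 + C 10 * X 2 * X 5 + C 2 * X 4 * X 5 + C 2 * X 5 ^ 2


-- ===== auxiliary lemmas =====

lemma deg1_single6 (d : Fin 6 →₀ ℕ) (hd : d.degree = 1) : ∃ i, d = Finsupp.single i 1 := by
  have hs : d.degree = ∑ i : Fin 6, d i :=
    Finset.sum_subset (Finset.subset_univ _)
      (fun i _ hi => Finsupp.notMem_support_iff.mp hi)
  rw [hs, Fin.sum_univ_six] at hd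
  have hc : (d 0 = 1 ∧ d 1 = 0 ∧ d 2 = 0 ∧ d 3 = 0 ∧ d 4 = 0 ∧ d 5 = 0)
      ∨ (d 0 = 0 ∧ d 1 = 1 ∧ d 2 = 0 ∧ d 3 = 0 ∧ d 4 = 0 ∧ d 5 = 0)
      ∨ (d 0 = 0 ∧ d 1 = 0 ∧ d 2 = 1 ∧ d 3 = 0 ∧ d 4 = 0 ∧ d 5 = 0)
      ∨ (d 0 = 0 ∧ d 1 = 0 ∧ d 2 = 0 ∧ d 3 = 1 ∧ d 4 = 0 ∧ d 5 = 0)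
      ∨ (d 0 = 0 ∧ d 1 = 0 ∧ d 2 = 0 ∧ d 3 = 0 ∧ d 4 = 1 ∧ d 5 = 0)
      ∨ (d 0 = 0 ∧ d 1 = 0 ∧ d 2 = 0 ∧ d 3 = 0 ∧ d 4 = 0 ∧ d 5 = 1) := by omega
  rcases hc with h|h|h|h|h|h
  · exact ⟨0, by ext j; fin_cases j <;> simp [Finsupp.single_apply, h.1, h.2.1, h.2.2.1,
      h.2.2.2.1, h.2.2.2.2.1, h.2.2.2.2.2]⟩
  · exact ⟨1, by ext j; fin_cases j <;> simp [Finsupp.single_apply, h.1, h.2.1, h.2.2.1,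
      h.2.2.2.1, h.2.2.2.2.1, h.2.2.2.2.2]⟩
  · exact ⟨2, by ext j; fin_cases j <;> simp [Finsupp.single_apply, h.1, h.2.1, h.2.2.1,
      h.2.2.2.1, h.2.2.2.2.1, h.2.2.2.2.2]⟩
  · exact ⟨3, by ext j; fin_cases j <;> simp [Finsupp.single_apply, h.1, h.2.1, h.2.2.1,
      h.2.2.2.1, h.2.2.2.2.1, h.2.2.2.2.2]⟩
  · exact ⟨4, by ext j; fin_cases j <;> simp [Finsupp.single_apply, h.1, h.2.1, h.2.2.1,
      h.2.2.2.1, h.2.2.2.2.1, h.2.2.2.2.2]⟩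
  · exact ⟨5, by ext j; fin_cases j <;> simp [Finsupp.single_apply, h.1, h.2.1, h.2.2.1,
      h.2.2.2.1, h.2.2.2.2.1, h.2.2.2.2.2]⟩

lemma rep_deg1_6 {p : MvPolynomial (Fin 6) ℝ} (hp : p.IsHomogeneous 1) :
    p = ∑ i : Fin 6, (C (coeff (Finsupp.single i 1) p) * X i) := by
  apply MvPolynomial.ext
  intro d
  rw [coeff_sum]
  simp only [coeff_C_mul, coeff_X']
  by_cases hd : d.degree = 1
  · obtain ⟨i0, rfl⟩ := deg1_single6 d hd
    have key : ∀ i : Fin 6, (Finsupp.single i 1 = Finsupp.single i0 (1:ℕ)) ↔ i = i0 :=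
      fun i => Finsupp.single_left_inj one_ne_zero
    simp [key]
  · rw [hp.coeff_eq_zero hd]
    rw [Finset.sum_eq_zero]
    intro i _
    rw [if_neg, mul_zero]
    intro h
    exact hd (by rw [← h]; simp [Finsupp.degree_single])

lemma eval_deg1_6 {p : MvPolynomial (Fin 6) ℝ} (hp : p.IsHomogeneous 1) (x : Fin 6 → ℝ) :
    eval x p = ∑ i : Fin 6, coeff (Finsupp.single i 1) p * x i := by
  conv_lhs => rw [rep_deg1_6 hp]
  simp [eval_sum]

noncomputable def l16 : MvPolynomial (Fin 6) ℝ := C 2 * X 0 + X 1 + C 5 * X 2 + X 5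
noncomputable def m16 : MvPolynomial (Fin 6) ℝ := C 3 * X 1 + X 2

def pt (a b c d e f : ℝ) : Fin 6 → ℝ := ![a,b,c,d,e,f]
lemma pt0 (a b c d e f : ℝ) : pt a b c d e f 0 = a := rfl
lemma pt1 (a b c d e f : ℝ) : pt a b c d e f 1 = b := rfl
lemma pt2 (a b c d e f : ℝ) : pt a b c d e f 2 = c := rfl
lemma pt3 (a b c d e f : ℝ) : pt a b c d e f 3 = d := rfl
lemma pt4 (a b c d e f : ℝ) : pt a b c d e f 4 = e := rfl
lemma pt5 (a b c d e f : ℝ) : pt a b c d e f 5 = f := rfl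

lemma hXX6 (i j : Fin 6) : (X i * X j : MvPolynomial (Fin 6) ℝ).IsHomogeneous 2 :=
  (isHomogeneous_X ℝ i).mul (isHomogeneous_X ℝ j)
lemma hCXX6 (r : ℝ) (i j : Fin 6) : (C r * X i * X j : MvPolynomial (Fin 6) ℝ).IsHomogeneous 2 :=
  ((isHomogeneous_C (Fin 6) r).mul (isHomogeneous_X ℝ i)).mul (isHomogeneous_X ℝ j)
lemma hCX26 (r : ℝ) (i : Fin 6) : (C r * (X i : MvPolynomial (Fin 6) ℝ) ^ 2).IsHomogeneous 2 := by
  have := (isHomogeneous_C (Fin 6) r).mul ((isHomogeneous_X ℝ i).pow 2)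
  simpa using this
lemma hCX6 (r : ℝ) (i : Fin 6) : (C r * X i : MvPolynomial (Fin 6) ℝ).IsHomogeneous 1 :=
  (isHomogeneous_C (Fin 6) r).mul (isHomogeneous_X ℝ i)

lemma qq6_hom : qq6.IsHomogeneous 2 := by
  unfold qq6
  exact ((hXX6 0 5).sub (hXX6 1 4)).add (hXX6 3 2)

lemma aS6_hom : aS6.IsHomogeneous 2 := by
  unfold aS6
  have h1 := ((hCX26 2 0).add (hXX6 0 1)).add (hCXX6 16 0 3)
  have h2 := (h1.add (hCXX6 5 1 3)).add (hCXX6 5 0 2)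
  have h3 := (h2.add (hCXX6 4 0 4)).add (hCXX6 32 1 4)
  have h4 := (h3.add (hCXX6 7 2 4)).sub (hCXX6 34 0 5)
  have h5 := (h4.add (hCXX6 2 1 5)).add (hCXX6 8 3 5)
  have h6 := (h5.add (hCXX6 10 2 5)).add (hCXX6 2 4 5)
  exact h6.add (hCX26 2 5)

lemma l16_hom : l16.IsHomogeneous 1 := by
  unfold l16
  exact (((hCX6 2 0).add (isHomogeneous_X ℝ 1)).add (hCX6 5 2)).add (isHomogeneous_X ℝ 5)

lemma m16_hom : m16.IsHomogeneous 1 := by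
  unfold m16
  exact (hCX6 3 1).add (isHomogeneous_X ℝ 2)

lemma aS6_decomp : aS6 = C (-39) * qq6 + l16 * h16 + m16 * h26 := by
  unfold aS6 qq6 h16 h26 l16 m16
  simp only [map_neg, map_ofNat]
  ring

lemma li6 : LinearIndependent ℝ ![qq6, aS6] := by
  rw [linearIndependent_fin2]
  constructor
  · simp only [Matrix.cons_val_one, Matrix.head_cons]
    intro h
    have := congrArg (eval (pt 1 0 0 0 0 0)) h
    simp [aS6, pt0, pt1, pt2, pt3, pt4, pt5] at this
  · intro a h
    simp only [Matrix.cons_val_one, Matrix.head_cons, Matrix.cons_val_zero] at h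
    have h1 := congrArg (eval (pt 1 0 0 0 0 0)) h
    simp [aS6, qq6, smul_eq_C_mul, pt0, pt1, pt2, pt3, pt4, pt5] at h1
    have h2 := congrArg (eval (pt 1 0 0 0 0 1)) h
    simp [aS6, qq6, smul_eq_C_mul, pt0, pt1, pt2, pt3, pt4, pt5, h1] at h2

theorem stmt6 :
    {q : MvPolynomial (Fin 6) ℝ |
        q.IsHomogeneous 2 ∧
        (∃ (α : ℝ) (ℓ₁ ℓ₂ : MvPolynomial (Fin 6) ℝ), ℓ₁.IsHomogeneous 1 ∧ ℓ₂.IsHomogeneous 1 ∧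
          q = C α * qq6 + ℓ₁ * h16 + ℓ₂ * h26) ∧
        (∀ x : Fin 6 → ℝ, x 0 = 0 → x 1 = 0 → x 2 = 0 → eval x h16 = 0 → eval x q = 0) ∧
        (∀ x : Fin 6 → ℝ, x 1 = 0 → x 2 = 0 → x 5 = 0 → eval x h16 = 0 → eval x q = 0) ∧
        (∀ x : Fin 6 → ℝ, x 0 = 0 → x 3 = 0 → x 4 = 0 → eval x h26 = 0 → eval x q = 0) ∧
        (∀ x : Fin 6 → ℝ, x 3 = 0 → x 4 = 0 → x 5 = 0 → eval x h26 = 0 → eval x q = 0) ∧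
        (∀ x : Fin 6 → ℝ, x 0 = 0 → x 1 = 0 → x 2 = 0 → x 5 = 0 → eval x q = 0) ∧
        (∀ x : Fin 6 → ℝ, x 0 = 0 → x 3 = 0 → x 4 = 0 → x 5 = 0 → eval x q = 0)} =
      ↑(Submodule.span ℝ {qq6, aS6}) ∧
    LinearIndependent ℝ ![qq6, aS6] := by
  constructor
  · ext q
    simp only [Set.mem_setOf_eq, SetLike.mem_coe]
    constructor
    · rintro ⟨-, ⟨α, ℓ₁, ℓ₂, hℓ₁, hℓ₂, hq⟩, hc1, hc2, hc3, hc4, hc5, hc6⟩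
      obtain ⟨A, hA⟩ : ∃ A : Fin 6 → ℝ, ∀ i, coeff (Finsupp.single i 1) ℓ₁ = A i :=
        ⟨_, fun i => rfl⟩
      obtain ⟨B, hB⟩ : ∃ B : Fin 6 → ℝ, ∀ i, coeff (Finsupp.single i 1) ℓ₂ = B i :=
        ⟨_, fun i => rfl⟩
      have hz : ∀ x : Fin 6 → ℝ, eval x q =
          α * (x 0 * x 5 - x 1 * x 4 + x 3 * x 2) +
          (A 0 * x 0 + A 1 * x 1 + A 2 * x 2 + A 3 * x 3 + A 4 * x 4 + A 5 * x 5) *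
            (x 0 - 3 * x 1 - x 2 + 8 * x 3 + 2 * x 4 + 2 * x 5) +
          (B 0 * x 0 + B 1 * x 1 + B 2 * x 2 + B 3 * x 3 + B 4 * x 4 + B 5 * x 5) *
            (2 * x 0 + x 1 + 5 * x 2 - x 3 - 3 * x 4 + x 5) := by
        intro x
        rw [hq]
        simp only [qq6, h16, h26, map_add, map_sub, map_mul, eval_C, eval_X, map_ofNat,
          eval_deg1_6 hℓ₁, eval_deg1_6 hℓ₂, Fin.sum_univ_six, hA, hB]
        try ring
      have e0 : 11 * B 3 - 44 * B 4 = 0 := by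
        have h := hc1 (pt 0 0 0 1 (-4) 0) rfl rfl rfl (by norm_num [h16, pt0, pt1, pt2, pt3, pt4, pt5])
        rw [hz] at h
        simp only [pt0, pt1, pt2, pt3, pt4, pt5] at h
        ring_nf at h ⊢
        linarith
      have e1 : -4 * B 4 + 4 * B 5 = 0 := by
        have h := hc1 (pt 0 0 0 0 1 (-1)) rfl rfl rfl (by norm_num [h16, pt0, pt1, pt2, pt3, pt4, pt5])
        rw [hz] at h
        simp only [pt0, pt1, pt2, pt3, pt4, pt5] at h
        ring_nf at h ⊢
        linarith
      have e3 : 136 * B 0 - 17 * B 3 = 0 := by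
        have h := hc2 (pt (-8) 0 0 1 0 0) rfl rfl rfl (by norm_num [h16, pt0, pt1, pt2, pt3, pt4, pt5])
        rw [hz] at h
        simp only [pt0, pt1, pt2, pt3, pt4, pt5] at h
        ring_nf at h ⊢
        linarith
      have e6 : -70 * A 1 + 14 * A 2 = 0 := by
        have h := hc3 (pt 0 (-5) 1 0 0 0) rfl rfl rfl (by norm_num [h26, pt0, pt1, pt2, pt3, pt4, pt5])
        rw [hz] at h
        simp only [pt0, pt1, pt2, pt3, pt4, pt5] at h
        ring_nf at h ⊢
        linarith
      have e7 : -5 * A 1 + 5 * A 5 = 0 := by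
        have h := hc3 (pt 0 (-1) 0 0 0 1) rfl rfl rfl (by norm_num [h26, pt0, pt1, pt2, pt3, pt4, pt5])
        rw [hz] at h
        simp only [pt0, pt1, pt2, pt3, pt4, pt5] at h
        ring_nf at h ⊢
        linarith
      have e9 : 7 * A 0 - 14 * A 1 = 0 := by
        have h := hc4 (pt 1 (-2) 0 0 0 0) rfl rfl rfl (by norm_num [h26, pt0, pt1, pt2, pt3, pt4, pt5])
        rw [hz] at h
        simp only [pt0, pt1, pt2, pt3, pt4, pt5] at h
        ring_nf at h ⊢
        linarith
      have e12 : 8 * A 3 - B 3 = 0 := by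
        have h := hc5 (pt 0 0 0 1 0 0) rfl rfl rfl rfl
        rw [hz] at h
        simp only [pt0, pt1, pt2, pt3, pt4, pt5] at h
        ring_nf at h ⊢
        linarith
      have e13 : 2 * A 4 - 3 * B 4 = 0 := by
        have h := hc5 (pt 0 0 0 0 1 0) rfl rfl rfl rfl
        rw [hz] at h
        simp only [pt0, pt1, pt2, pt3, pt4, pt5] at h
        ring_nf at h ⊢
        linarith
      have e15 : -3 * A 1 + B 1 = 0 := by
        have h := hc6 (pt 0 1 0 0 0 0) rfl rfl rfl rfl
        rw [hz] at h
        simp only [pt0, pt1, pt2, pt3, pt4, pt5] at h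
        ring_nf at h ⊢
        linarith
      have e16 : -1 * A 2 + 5 * B 2 = 0 := by
        have h := hc6 (pt 0 0 1 0 0 0) rfl rfl rfl rfl
        rw [hz] at h
        simp only [pt0, pt1, pt2, pt3, pt4, pt5] at h
        ring_nf at h ⊢
        linarith
      have key : q = C (α + 39 * B 2 + 39/2 * B 5) * qq6 + C (B 2 + 1/2 * B 5) * aS6 := by
        apply MvPolynomial.funext
        intro x
        rw [hz]
        simp only [qq6, aS6, map_add, map_sub, map_mul, map_pow, eval_C, eval_X, map_ofNat]
        linear_combination
          ((1/44) * x 0 * x 0 + (1/88) * x 0 * x 1 + (5/88) * x 0 * x 2 + (2/11) * x 0 * x 3 + (-3/88) * x 0 * x 4 + (1/88) * x 0 * x 5 + (5/88) * x 1 * x 3 + (39/88) * x 2 * x 3 + (-1/4) * x 3 * x 4 + (5/44) * x 3 * x 5) * e0 +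
          ((-1/4) * x 0 * x 0 + (-1/8) * x 0 * x 1 + (-5/8) * x 0 * x 2 + (-2) * x 0 * x 3 + (-1/2) * x 0 * x 4 + (-1/8) * x 0 * x 5 + (-5/8) * x 1 * x 3 + (7/8) * x 1 * x 4 + (-39/8) * x 2 * x 3 + (-7/8) * x 2 * x 4 + (-5/4) * x 3 * x 5 + (-1) * x 4 * x 5) * e1 +
          ((1/68) * x 0 * x 0 + (1/136) * x 0 * x 1 + (5/136) * x 0 * x 2 + (-1/136) * x 0 * x 3 + (-3/136) * x 0 * x 4 + (1/136) * x 0 * x 5) * e3 +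
          ((-1/35) * x 0 * x 0 + (-1/70) * x 0 * x 1 + (1/35) * x 0 * x 2 + (-8/35) * x 0 * x 3 + (-2/35) * x 0 * x 4 + (-1/14) * x 0 * x 5 + (-1/5) * x 1 * x 2 + (-1/14) * x 1 * x 3 + (1/10) * x 1 * x 4 + (-1/35) * x 1 * x 5 + (1/70) * x 2 * x 5 + (-4/35) * x 3 * x 5 + (-1/35) * x 4 * x 5 + (-1/35) * x 5 * x 5) * e6 +
          ((1/5) * x 0 * x 5 + (-3/5) * x 1 * x 5 + (-1/5) * x 2 * x 5 + (8/5) * x 3 * x 5 + (2/5) * x 4 * x 5 + (2/5) * x 5 * x 5) * e7 +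
          ((1/7) * x 0 * x 0 + (-3/7) * x 0 * x 1 + (-1/7) * x 0 * x 2 + (8/7) * x 0 * x 3 + (2/7) * x 0 * x 4 + (2/7) * x 0 * x 5) * e9 +
          ((1/8) * x 0 * x 3 + (-3/8) * x 1 * x 3 + (-1/8) * x 2 * x 3 + (1) * x 3 * x 3 + (1/4) * x 3 * x 4 + (1/4) * x 3 * x 5) * e12 +
          ((1/2) * x 0 * x 4 + (-3/2) * x 1 * x 4 + (-1/2) * x 2 * x 4 + (4) * x 3 * x 4 + (1) * x 4 * x 4 + (1) * x 4 * x 5) * e13 +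
          ((2) * x 0 * x 1 + (1) * x 1 * x 1 + (5) * x 1 * x 2 + (-1) * x 1 * x 3 + (-3) * x 1 * x 4 + (1) * x 1 * x 5) * e15 +
          ((-2/5) * x 0 * x 0 + (-1/5) * x 0 * x 1 + (-3/5) * x 0 * x 2 + (-16/5) * x 0 * x 3 + (-4/5) * x 0 * x 4 + (-1) * x 0 * x 5 + (1/5) * x 1 * x 2 + (-1) * x 1 * x 3 + (7/5) * x 1 * x 4 + (-2/5) * x 1 * x 5 + (1) * x 2 * x 2 + (-8) * x 2 * x 3 + (-2) * x 2 * x 4 + (-9/5) * x 2 * x 5 + (-8/5) * x 3 * x 5 + (-2/5) * x 4 * x 5 + (-2/5) * x 5 * x 5) * e16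
      exact Submodule.mem_span_pair.mpr ⟨α + 39 * B 2 + 39/2 * B 5, B 2 + 1/2 * B 5,
        by rw [smul_eq_C_mul, smul_eq_C_mul, key]⟩
    · intro hq
      obtain ⟨a, b, rfl⟩ := Submodule.mem_span_pair.mp hq
      have habC : ∀ x : Fin 6 → ℝ, eval x (a • qq6 + b • aS6) =
          a * (x 0 * x 5 - x 1 * x 4 + x 3 * x 2) +
          b * (2 * x 0 ^ 2 + x 0 * x 1 + 16 * (x 0 * x 3) + 5 * (x 1 * x 3) + 5 * (x 0 * x 2) +
            4 * (x 0 * x 4) + 32 * (x 1 * x 4) + 7 * (x 2 * x 4) - 34 * (x 0 * x 5) +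
            2 * (x 1 * x 5) + 8 * (x 3 * x 5) + 10 * (x 2 * x 5) + 2 * (x 4 * x 5) +
            2 * x 5 ^ 2) := by
        intro x
        rw [smul_eq_C_mul, smul_eq_C_mul]
        simp only [qq6, aS6, map_add, map_sub, map_mul, map_pow, eval_C, eval_X, map_ofNat]
        ring
      have hh1 : ∀ x : Fin 6 → ℝ, eval x h16 =
          x 0 - 3 * x 1 - x 2 + 8 * x 3 + 2 * x 4 + 2 * x 5 := by
        intro x
        simp only [h16, map_add, map_sub, map_mul, eval_C, eval_X, map_ofNat]
      have hh2 : ∀ x : Fin 6 → ℝ, eval x h26 =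
          2 * x 0 + x 1 + 5 * x 2 - x 3 - 3 * x 4 + x 5 := by
        intro x
        simp only [h26, map_add, map_sub, map_mul, eval_C, eval_X, map_ofNat]
      refine ⟨?_, ?_, ?_, ?_, ?_, ?_, ?_, ?_⟩
      · rw [smul_eq_C_mul, smul_eq_C_mul]
        exact (qq6_hom.C_mul a).add (aS6_hom.C_mul b)
      · refine ⟨a + b * (-39), C b * l16, C b * m16, l16_hom.C_mul b, m16_hom.C_mul b, ?_⟩
        have hC : C (R := ℝ) (σ := Fin 6) (a + b * (-39)) = C a + C b * C (-39) := by
          rw [C_add, C_mul]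
        rw [smul_eq_C_mul, smul_eq_C_mul, aS6_decomp, hC]
        ring
      · intro x h0 h1 h2 hh
        rw [hh1] at hh
        rw [habC, h0, h1, h2]
        rw [h0, h1, h2] at hh
        linear_combination (b * x 5) * hh
      · intro x h1 h2 h5 hh
        rw [hh1] at hh
        rw [habC, h1, h2, h5]
        rw [h1, h2, h5] at hh
        linear_combination (2 * b * x 0) * hh
      · intro x h0 h3 h4 hh
        rw [hh2] at hh
        rw [habC, h0, h3, h4]
        rw [h0, h3, h4] at hh
        linear_combination (2 * b * x 5) * hh
      · intro x h3 h4 h5 hh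
        rw [hh2] at hh
        rw [habC, h3, h4, h5]
        rw [h3, h4, h5] at hh
        linear_combination (b * x 0) * hh
      · intro x h0 h1 h2 h5
        rw [habC, h0, h1, h2, h5]
        ring
      · intro x h0 h3 h4 h5
        rw [habC, h0, h3, h4, h5]
        ring
  · exact li6
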